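/- Let $J$ be the matrix of the previous statement. Then every eigenvalue of $J$ has strictly negative real part. -/

import Mathlib

open Matrix

/-- Every (complex) eigenvalue of the Jacobian at the coexistence equilibrium has strictly
negative real part. -/
theorem stmt_4 (lam₁ lam₂ η₁ η₂ a₁ a₂ b₁ b₂ u₁ u₂ : ℝ)
    (hlam₁ : 0 < lam₁) (hlam₂ : 0 < lam₂) (hη₁ : 0 < η₁) (hη₂ : 0 < η₂)
    (ha₁ : 0 < a₁) (ha₂ : 0 < a₂) (hb₁ : 0 < b₁) (hb₂ : 0 < b₂)
    (hu₁ : 0 < u₁) (hu₂ : 0 < u₂) :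
    let J : Matrix (Fin 4) (Fin 4) ℂ :=
      !![(-lam₁ * u₁ : ℂ), η₁ * u₁, 0, 0;
         -η₂ * u₂, -lam₂ * u₂, 0, 0;
         0, a₁, -b₁, 0;
         a₂, 0, 0, -b₂]
    ∀ μ : ℂ, μ ∈ spectrum ℂ J → μ.re < 0 := by
  intro J μ hμ
  rw [spectrum.mem_iff] at hμ
  have hdet : (algebraMap ℂ (Matrix (Fin 4) (Fin 4) ℂ) μ - J).det = 0 := by
    by_contra h
    exact hμ ((Matrix.isUnit_iff_isUnit_det _).mpr (isUnit_iff_ne_zero.mpr h))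
  have hM : (algebraMap ℂ (Matrix (Fin 4) (Fin 4) ℂ)) μ - J =
      !![μ + lam₁ * u₁, -(η₁ * u₁), 0, 0;
         η₂ * u₂, μ + lam₂ * u₂, 0, 0;
         0, -a₁, μ + b₁, 0;
         -a₂, 0, 0, μ + b₂] := by
    ext i j
    fin_cases i <;> fin_cases j <;>
      simp [J, Matrix.algebraMap_matrix_apply] <;> ring
  rw [hM] at hdet
  simp [Matrix.det_succ_row_zero, Fin.sum_univ_succ, Fin.succAbove] at hdet
  have hfac : (μ + b₁) * (μ + b₂) *
      ((μ + lam₁ * u₁) * (μ + lam₂ * u₂) + (η₁:ℂ) * η₂ * u₁ * u₂) = 0 := by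
    linear_combination hdet
  rcases mul_eq_zero.mp hfac with h | hq
  · rcases mul_eq_zero.mp h with h1 | h2
    · have : μ = -(b₁ : ℂ) := by linear_combination h1
      rw [this]; simpa using hb₁
    · have : μ = -(b₂ : ℂ) := by linear_combination h2
      rw [this]; simpa using hb₂
  · set x := μ.re
    set y := μ.im
    have hre := congrArg Complex.re hq
    have him := congrArg Complex.im hq
    simp [Complex.add_re, Complex.add_im, Complex.mul_re, Complex.mul_im,
      Complex.ofReal_re, Complex.ofReal_im] at hre him
    have hc₁ : 0 < lam₁ * u₁ := by positivity
    have hc₂ : 0 < lam₂ * u₂ := by positivity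
    have hk : 0 < η₁ * η₂ * u₁ * u₂ := by positivity
    by_contra hx
    push_neg at hx
    have hy2 : 0 < μ.im * μ.im := by
      nlinarith [mul_pos (show (0:ℝ) < μ.re + lam₁ * u₁ by simp only [x] at hx; linarith)
        (show (0:ℝ) < μ.re + lam₂ * u₂ by simp only [x] at hx; linarith)]
    have hs : 0 < 2 * μ.re + lam₁ * u₁ + lam₂ * u₂ := by
      simp only [x] at hx; linarith
    have h2 : (2 * μ.re + lam₁ * u₁ + lam₂ * u₂) * (μ.im * μ.im) = 0 := by
      have := congrArg (· * μ.im) him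
      linear_combination this
    nlinarith [mul_pos hs hy2]
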